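/- Let k₀ be a field containing a primitive m-th root of unity where m is prime, let q ∈ k₀^× with q ≠ 1, let K = k₀(y), and let σ be the k₀-automorphism of K with σ(y) = qy. Let a ∈ k₀[y] be a nonzero polynomial with m not dividing deg_y(a). Then σ^{m−1}(b)·σ^{m−2}(b)⋯σ(b)·b ≠ a for all b ∈ K, and the algebra S_f on K^m associated with f(t) = t^m − a has no nonzero zero divisors; in fact right multiplication by every nonzero element of S_f is bijective. -/

import Mathlib

open Finset

section Aux

open Polynomial RatFunc

theorem myIntDegree_inv {k₀ : Type*} [Field k₀] (x : RatFunc k₀) (hx : x ≠ 0) :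
    x⁻¹.intDegree = -x.intDegree := by
  have h1 : x * x⁻¹ = 1 := mul_inv_cancel₀ hx
  have h2 := RatFunc.intDegree_mul hx (inv_ne_zero hx)
  rw [h1, RatFunc.intDegree_one] at h2
  omega

theorem sigma_alg {k₀ : Type*} [Field k₀] (q : k₀) (σ : RatFunc k₀ →+* RatFunc k₀)
    (hσC : ∀ c : k₀, σ (RatFunc.C c) = RatFunc.C c)
    (hσX : σ RatFunc.X = RatFunc.C q * RatFunc.X) (p : k₀[X]) :
    σ (algebraMap k₀[X] (RatFunc k₀) p)
      = algebraMap k₀[X] (RatFunc k₀) (p.comp (Polynomial.C q * Polynomial.X)) := by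
  have h : σ.comp (algebraMap k₀[X] (RatFunc k₀))
      = (algebraMap k₀[X] (RatFunc k₀)).comp
        (Polynomial.eval₂RingHom Polynomial.C (Polynomial.C q * Polynomial.X)) := by
    apply Polynomial.ringHom_ext
    · intro c
      simp [hσC, RatFunc.algebraMap_C]
    · simp [hσX, RatFunc.algebraMap_X]
  have := DFunLike.congr_fun h p
  simpa [Polynomial.comp] using this

theorem sigma_intDegree {k₀ : Type*} [Field k₀] (q : k₀) (hq0 : q ≠ 0)
    (σ : RatFunc k₀ →+* RatFunc k₀)
    (hσC : ∀ c : k₀, σ (RatFunc.C c) = RatFunc.C c)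
    (hσX : σ RatFunc.X = RatFunc.C q * RatFunc.X) (x : RatFunc k₀) :
    (σ x).intDegree = x.intDegree := by
  rcases eq_or_ne x 0 with rfl | hx
  · simp
  · have hdc : ∀ p : k₀[X], (p.comp (Polynomial.C q * Polynomial.X)).natDegree = p.natDegree := by
      intro p
      rw [Polynomial.natDegree_comp, Polynomial.natDegree_C_mul_X q hq0, mul_one]
    have hcomp0 : ∀ p : k₀[X], p ≠ 0 → p.comp (Polynomial.C q * Polynomial.X) ≠ 0 := by
      intro p hp h
      have h2 := sigma_alg q σ hσC hσX p
      rw [h, map_zero] at h2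
      exact hp ((map_eq_zero_iff _ (IsFractionRing.injective k₀[X] (RatFunc k₀))).mp
        (σ.injective (by rw [h2, map_zero])))
    have hnum : x.num ≠ 0 := RatFunc.num_ne_zero hx
    have hden : x.denom ≠ 0 := x.denom_ne_zero
    have halg : ∀ p : k₀[X], p ≠ 0 → algebraMap k₀[X] (RatFunc k₀) p ≠ 0 := fun p hp =>
      (map_ne_zero_iff _ (IsFractionRing.injective k₀[X] (RatFunc k₀))).mpr hp
    have hx' : x = algebraMap k₀[X] (RatFunc k₀) x.num
        * (algebraMap k₀[X] (RatFunc k₀) x.denom)⁻¹ := by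
      rw [← div_eq_mul_inv, RatFunc.num_div_denom]
    rw [hx', map_mul, map_inv₀, sigma_alg q σ hσC hσX, sigma_alg q σ hσC hσX,
      RatFunc.intDegree_mul (halg _ (hcomp0 _ hnum)) (inv_ne_zero (halg _ (hcomp0 _ hden))),
      RatFunc.intDegree_mul (halg _ hnum) (inv_ne_zero (halg _ hden)),
      myIntDegree_inv _ (halg _ (hcomp0 _ hden)), myIntDegree_inv _ (halg _ hden),
      RatFunc.intDegree_polynomial, RatFunc.intDegree_polynomial,
      RatFunc.intDegree_polynomial, RatFunc.intDegree_polynomial, hdc, hdc]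

theorem weight_ne (m e : ℕ) (hm : Nat.Prime m) (hdeg : ¬ m ∣ e) (i i' : Fin m) (hne : i ≠ i')
    (d d' : ℤ) : (m:ℤ)*d + (i:ℕ)*(e:ℤ) ≠ (m:ℤ)*d' + (i':ℕ)*(e:ℤ) := by
  intro h
  have hdvd : (m:ℤ) ∣ (((i':ℕ):ℤ) - ((i:ℕ):ℤ)) * e := ⟨d - d', by ring_nf; linarith⟩
  have hp : Prime (m:ℤ) := Int.prime_iff_natAbs_prime.mpr (by simpa using hm)
  rcases hp.dvd_mul.mp hdvd with h1 | h2
  · have h3 : (((i':ℕ):ℤ) - ((i:ℕ):ℤ)) = 0 := by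
      refine Int.eq_zero_of_dvd_of_natAbs_lt_natAbs h1 ?_
      have hi := i.isLt; have hi' := i'.isLt
      simp only [Int.natAbs_natCast]
      omega
    have : (i:ℕ) = (i':ℕ) := by omega
    exact hne (Fin.ext this)
  · exact hdeg (Int.natCast_dvd_natCast.mp h2)

end Aux

/-- Coordinates of the product in the algebra `S_f`, `f(t) = t^m − A ∈ K[t;σ]`,
`K = k₀(y)`: `(x t^i) ∘ (z t^j) = x σ^i(z) t^{i+j}` if `i+j < m` and
`(x t^i) ∘ (z t^j) = x σ^i(z) σ^{i+j−m}(A) t^{i+j−m}` if `i+j ≥ m`. -/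
noncomputable def cycMulRf (k₀ : Type*) [Field k₀] (m : ℕ)
    (σ : RatFunc k₀ →+* RatFunc k₀) (A : RatFunc k₀)
    (u v : Fin m → RatFunc k₀) : Fin m → RatFunc k₀ :=
  fun k =>
    (∑ i : Fin m, ∑ j : Fin m,
        if (i : ℕ) + (j : ℕ) = (k : ℕ) then u i * (⇑σ)^[(i : ℕ)] (v j) else 0) +
      ∑ i : Fin m, ∑ j : Fin m,
        if (i : ℕ) + (j : ℕ) = (k : ℕ) + m then
          u i * (⇑σ)^[(i : ℕ)] (v j) * (⇑σ)^[(k : ℕ)] A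
        else 0

/-- Let `k₀` contain a primitive `m`-th root of unity (`m` prime), let
`q ∈ k₀^×` with `q ≠ 1`, `K = k₀(y)`, and `σ` the `k₀`-automorphism of `K` with
`σ(y) = qy`. Let `a ∈ k₀[y]` be nonzero with `m ∤ deg_y(a)`. Then
`σ^{m−1}(b)⋯σ(b)·b ≠ a` for all `b ∈ K`, the algebra `S_f` for `f(t) = t^m − a` has no
nonzero zero divisors, and right multiplication by every nonzero element is bijective. -/
theorem stmt15 (k₀ : Type*) [Field k₀] (m : ℕ) (hm : Nat.Prime m)
    (ω : k₀) (hω : IsPrimitiveRoot ω m)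
    (q : k₀) (hq0 : q ≠ 0) (hq1 : q ≠ 1)
    (σ : RatFunc k₀ →+* RatFunc k₀) (hσsurj : Function.Surjective σ)
    (hσC : ∀ c : k₀, σ (RatFunc.C c) = RatFunc.C c)
    (hσX : σ RatFunc.X = RatFunc.C q * RatFunc.X)
    (a : Polynomial k₀) (ha : a ≠ 0) (hdeg : ¬(m ∣ a.natDegree)) :
    (∀ b : RatFunc k₀,
      (∏ l ∈ Finset.range m, (⇑σ)^[l] b) ≠ algebraMap (Polynomial k₀) (RatFunc k₀) a) ∧
    (∀ u v : Fin m → RatFunc k₀,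
      cycMulRf k₀ m σ (algebraMap (Polynomial k₀) (RatFunc k₀) a) u v = 0 →
        u = 0 ∨ v = 0) ∧
    (∀ g : Fin m → RatFunc k₀, g ≠ 0 →
      Function.Bijective fun h =>
        cycMulRf k₀ m σ (algebraMap (Polynomial k₀) (RatFunc k₀) a) h g) := by
  classical
  set K := RatFunc k₀
  set A : K := algebraMap (Polynomial k₀) (RatFunc k₀) a with hA
  set e : ℕ := a.natDegree with he
  have hm0 : 0 < m := hm.pos
  have hσd : ∀ x : K, (σ x).intDegree = x.intDegree := sigma_intDegree q hq0 σ hσC hσX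
  have hσ0 : ∀ x : K, x ≠ 0 → σ x ≠ 0 := fun x hx => by
    intro h; exact hx (σ.injective (by rw [h, map_zero]))
  have hitd : ∀ (l : ℕ) (x : K), ((⇑σ)^[l] x).intDegree = x.intDegree := by
    intro l
    induction l with
    | zero => intro x; rfl
    | succ n ih => intro x; rw [Function.iterate_succ_apply', hσd, ih]
  have hit0 : ∀ (l : ℕ) (x : K), x ≠ 0 → (⇑σ)^[l] x ≠ 0 := by
    intro l
    induction l with
    | zero => intro x hx; exact hx
    | succ n ih => intro x hx; rw [Function.iterate_succ_apply']; exact hσ0 _ (ih x hx)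
  have hA0 : A ≠ 0 :=
    (map_ne_zero_iff _ (IsFractionRing.injective (Polynomial k₀) (RatFunc k₀))).mpr ha
  have hAd : A.intDegree = (e : ℤ) := RatFunc.intDegree_polynomial
  -- Part 1
  have part1 : ∀ b : K, (∏ l ∈ Finset.range m, (⇑σ)^[l] b) ≠ A := by
    intro b hb
    rcases eq_or_ne b 0 with rfl | hb0
    · apply hA0
      rw [← hb]
      exact Finset.prod_eq_zero (Finset.mem_range.mpr hm0) (by simp)
    · have key : ∀ n : ℕ, (∏ l ∈ Finset.range n, (⇑σ)^[l] b) ≠ 0 ∧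
          (∏ l ∈ Finset.range n, (⇑σ)^[l] b).intDegree = n * b.intDegree := by
        intro n
        induction n with
        | zero => simp
        | succ n ih =>
          rw [Finset.prod_range_succ]
          constructor
          · exact mul_ne_zero ih.1 (hit0 n b hb0)
          · rw [RatFunc.intDegree_mul ih.1 (hit0 n b hb0), ih.2, hitd]
            push_cast; ring
      have h2 := (key m).2
      rw [hb, hAd] at h2
      exact hdeg (Int.natCast_dvd_natCast.mp ⟨b.intDegree, h2⟩)
  -- Part 2
  have part2 : ∀ u v : Fin m → K, cycMulRf k₀ m σ A u v = 0 → u = 0 ∨ v = 0 := by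
    intro u v huv
    by_contra hcon
    push_neg at hcon
    obtain ⟨hu, hv⟩ := hcon
    obtain ⟨i', hi'⟩ := Function.ne_iff.mp hu
    obtain ⟨j', hj'⟩ := Function.ne_iff.mp hv
    set F : Fin m → ℤ := fun i => (m:ℤ) * (u i).intDegree + (i:ℕ) * (e:ℤ) with hF
    set G : Fin m → ℤ := fun j => (m:ℤ) * (v j).intDegree + (j:ℕ) * (e:ℤ) with hG
    obtain ⟨i₀, hi₀s, hi₀max⟩ := Finset.exists_max_image
      (Finset.univ.filter fun i => u i ≠ 0) F ⟨i', by simpa using hi'⟩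
    obtain ⟨j₀, hj₀s, hj₀max⟩ := Finset.exists_max_image
      (Finset.univ.filter fun j => v j ≠ 0) G ⟨j', by simpa using hj'⟩
    have hui₀ : u i₀ ≠ 0 := by simpa using hi₀s
    have hvj₀ : v j₀ ≠ 0 := by simpa using hj₀s
    have hFle : ∀ i, u i ≠ 0 → F i ≤ F i₀ := fun i hi => hi₀max i (by simpa using hi)
    have hGle : ∀ j, v j ≠ 0 → G j ≤ G j₀ := fun j hj => hj₀max j (by simpa using hj)
    have hFlt : ∀ i, u i ≠ 0 → i ≠ i₀ → F i < F i₀ := fun i hi hne =>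
      lt_of_le_of_ne (hFle i hi) (weight_ne m e hm hdeg i i₀ hne _ _)
    have hGlt : ∀ j, v j ≠ 0 → j ≠ j₀ → G j < G j₀ := fun j hj hne =>
      lt_of_le_of_ne (hGle j hj) (weight_ne m e hm hdeg j j₀ hne _ _)
    set kk : Fin m := i₀ + j₀ with hkk
    set T : Fin m × Fin m → K := fun p =>
      (if (p.1 : ℕ) + (p.2 : ℕ) = (kk : ℕ) then u p.1 * (⇑σ)^[(p.1 : ℕ)] (v p.2) else 0) +
      (if (p.1 : ℕ) + (p.2 : ℕ) = (kk : ℕ) + m then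
        u p.1 * (⇑σ)^[(p.1 : ℕ)] (v p.2) * (⇑σ)^[(kk : ℕ)] A else 0) with hT
    have hco : cycMulRf k₀ m σ A u v kk = ∑ p : Fin m × Fin m, T p := by
      simp only [cycMulRf, hT, Fintype.sum_prod_type, Finset.sum_add_distrib]
    -- degree computations for terms
    have hval1 : ∀ i j : Fin m, u i ≠ 0 → v j ≠ 0 →
        u i * (⇑σ)^[(i:ℕ)] (v j) ≠ 0 ∧
        (m:ℤ) * (u i * (⇑σ)^[(i:ℕ)] (v j)).intDegree
          = F i + G j - (i:ℕ) * (e:ℤ) - (j:ℕ) * (e:ℤ) := by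
      intro i j hi hj
      refine ⟨mul_ne_zero hi (hit0 _ _ hj), ?_⟩
      rw [RatFunc.intDegree_mul hi (hit0 _ _ hj), hitd]
      simp only [hF, hG]
      ring
    have hval2 : ∀ i j : Fin m, u i ≠ 0 → v j ≠ 0 →
        u i * (⇑σ)^[(i:ℕ)] (v j) * (⇑σ)^[(kk:ℕ)] A ≠ 0 ∧
        (m:ℤ) * (u i * (⇑σ)^[(i:ℕ)] (v j) * (⇑σ)^[(kk:ℕ)] A).intDegree
          = F i + G j - (i:ℕ) * (e:ℤ) - (j:ℕ) * (e:ℤ) + (m:ℤ) * (e:ℤ) := by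
      intro i j hi hj
      have h1 := hval1 i j hi hj
      refine ⟨mul_ne_zero h1.1 (hit0 _ _ hA0), ?_⟩
      rw [RatFunc.intDegree_mul h1.1 (hit0 _ _ hA0), hitd, hAd, mul_add, h1.2]
    have hkval : (kk : ℕ) = ((i₀:ℕ) + (j₀:ℕ)) % m := by
      rw [hkk, Fin.add_def]
    -- the main term
    have hmain : T (i₀, j₀) ≠ 0 ∧
        (m:ℤ) * (T (i₀, j₀)).intDegree = F i₀ + G j₀ - (kk:ℕ) * (e:ℤ) := by
      rcases lt_or_ge ((i₀:ℕ) + (j₀:ℕ)) m with hlt | hge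
      · have hk1 : (kk:ℕ) = (i₀:ℕ) + (j₀:ℕ) := by rw [hkval, Nat.mod_eq_of_lt hlt]
        have hc1 : (i₀:ℕ) + (j₀:ℕ) = (kk:ℕ) := hk1.symm
        have hc2 : ¬ ((i₀:ℕ) + (j₀:ℕ) = (kk:ℕ) + m) := by omega
        have hTval : T (i₀, j₀) = u i₀ * (⇑σ)^[(i₀:ℕ)] (v j₀) := by
          rw [hT]; simp only [if_pos hc1, if_neg hc2, add_zero]
        obtain ⟨hne, hdeq⟩ := hval1 i₀ j₀ hui₀ hvj₀
        rw [hTval]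
        refine ⟨hne, ?_⟩
        have hc : ((kk:ℕ):ℤ) = ((i₀:ℕ):ℤ) + ((j₀:ℕ):ℤ) := by exact_mod_cast hk1
        rw [hdeq]
        linear_combination (e:ℤ) * hc
      · have hk1 : (kk:ℕ) + m = (i₀:ℕ) + (j₀:ℕ) := by
          have hi := i₀.isLt; have hj := j₀.isLt
          rw [hkval, Nat.mod_eq_sub_mod hge, Nat.mod_eq_of_lt (by omega)]
          omega
        have hc1 : ¬ ((i₀:ℕ) + (j₀:ℕ) = (kk:ℕ)) := by omega
        have hc2 : (i₀:ℕ) + (j₀:ℕ) = (kk:ℕ) + m := hk1.symm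
        have hTval : T (i₀, j₀) = u i₀ * (⇑σ)^[(i₀:ℕ)] (v j₀) * (⇑σ)^[(kk:ℕ)] A := by
          rw [hT]; simp only [if_pos hc2, if_neg hc1, zero_add]
        obtain ⟨hne, hdeq⟩ := hval2 i₀ j₀ hui₀ hvj₀
        rw [hTval]
        refine ⟨hne, ?_⟩
        rw [hdeq]
        have hc : ((i₀:ℕ) : ℤ) + ((j₀:ℕ) : ℤ) = ((kk:ℕ) : ℤ) + (m:ℤ) := by
          exact_mod_cast hk1.symm
        linear_combination (-(e:ℤ)) * hc
    set D : ℤ := (T (i₀, j₀)).intDegree with hD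
    -- other terms are strictly smaller
    have hsmall : ∀ p : Fin m × Fin m, p ≠ (i₀, j₀) →
        T p = 0 ∨ (T p ≠ 0 ∧ (T p).intDegree < D) := by
      rintro ⟨i, j⟩ hne
      have hFGlt : u i ≠ 0 → v j ≠ 0 → F i + G j < F i₀ + G j₀ := by
        intro hi hj
        rcases eq_or_ne i i₀ with rfl | hii
        · have hjj : j ≠ j₀ := by
            intro h; exact hne (by rw [h])
          have := hGlt j hj hjj
          linarith
        · have h1 := hFlt i hi hii
          have h2 := hGle j hj
          linarith
      by_cases hc1 : (i:ℕ) + (j:ℕ) = (kk:ℕ)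
      · have hc2 : ¬ ((i:ℕ) + (j:ℕ) = (kk:ℕ) + m) := by omega
        have hTval : T (i, j) = u i * (⇑σ)^[(i:ℕ)] (v j) := by
          rw [hT]; simp only [if_pos hc1, if_neg hc2, add_zero]
        rcases eq_or_ne (u i) 0 with hui | hui
        · left; rw [hTval, hui, zero_mul]
        rcases eq_or_ne (v j) 0 with hvj | hvj
        · left; rw [hTval, hvj]; simp
        right
        obtain ⟨hne', hdeq⟩ := hval1 i j hui hvj
        rw [hTval]
        refine ⟨hne', ?_⟩
        have hlt := hFGlt hui hvj
        have hcast : ((i:ℕ):ℤ) * (e:ℤ) + ((j:ℕ):ℤ) * (e:ℤ) = ((kk:ℕ):ℤ) * (e:ℤ) := by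
          have : ((i:ℕ):ℤ) + ((j:ℕ):ℤ) = ((kk:ℕ):ℤ) := by exact_mod_cast hc1
          rw [← this]; ring
        have h3 : (m:ℤ) * (u i * (⇑σ)^[(i:ℕ)] (v j)).intDegree < (m:ℤ) * D := by
          rw [hdeq, hmain.2]
          linarith [hlt, hcast]
        exact lt_of_mul_lt_mul_left h3 (by positivity)
      · by_cases hc2 : (i:ℕ) + (j:ℕ) = (kk:ℕ) + m
        · have hTval : T (i, j) = u i * (⇑σ)^[(i:ℕ)] (v j) * (⇑σ)^[(kk:ℕ)] A := by
            rw [hT]; simp only [if_pos hc2, if_neg hc1, zero_add]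
          rcases eq_or_ne (u i) 0 with hui | hui
          · left; rw [hTval, hui]; simp
          rcases eq_or_ne (v j) 0 with hvj | hvj
          · left; rw [hTval, hvj]; simp
          right
          obtain ⟨hne', hdeq⟩ := hval2 i j hui hvj
          rw [hTval]
          refine ⟨hne', ?_⟩
          have hlt := hFGlt hui hvj
          have hcast : ((i:ℕ):ℤ) + ((j:ℕ):ℤ) = ((kk:ℕ):ℤ) + (m:ℤ) := by exact_mod_cast hc2
          have hcast2 : ((i:ℕ):ℤ)*(e:ℤ) + ((j:ℕ):ℤ)*(e:ℤ) = ((kk:ℕ):ℤ)*(e:ℤ) + (m:ℤ)*(e:ℤ) := by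
            rw [← add_mul, ← add_mul, hcast]
          have h3 : (m:ℤ) * (u i * (⇑σ)^[(i:ℕ)] (v j) * (⇑σ)^[(kk:ℕ)] A).intDegree
              < (m:ℤ) * D := by
            rw [hdeq, hmain.2]
            linarith [hlt, hcast2]
          exact lt_of_mul_lt_mul_left h3 (by positivity)
        · left; rw [hT]; simp only [if_neg hc1, if_neg hc2, add_zero]
      -- end
    -- conclude
    have hsum : (0 : K) = T (i₀, j₀) + ∑ p ∈ Finset.univ.erase (i₀, j₀), T p := by
      rw [Finset.add_sum_erase _ T (Finset.mem_univ _), ← hco]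
      have := congrFun huv kk
      simpa using this.symm
    have hrest : (∑ p ∈ Finset.univ.erase (i₀, j₀), T p) = 0 ∨
        ((∑ p ∈ Finset.univ.erase (i₀, j₀), T p) ≠ 0 ∧
          (∑ p ∈ Finset.univ.erase (i₀, j₀), T p).intDegree < D) := by
      refine Finset.sum_induction T (fun z => z = 0 ∨ (z ≠ 0 ∧ z.intDegree < D)) ?_ ?_ ?_
      · rintro x y (rfl | ⟨hx, hdx⟩) hy
        · simpa using hy
        · rcases hy with rfl | ⟨hy, hdy⟩
          · right; rw [add_zero]; exact ⟨hx, hdx⟩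
          · by_cases hxy : x + y = 0
            · left; exact hxy
            · right
              exact ⟨hxy, lt_of_le_of_lt (RatFunc.intDegree_add_le hy hxy)
                (max_lt hdx hdy)⟩
      · left; rfl
      · intro p hp
        exact hsmall p (Finset.ne_of_mem_erase hp)
    rcases hrest with hr0 | ⟨hr, hrd⟩
    · rw [hr0, add_zero] at hsum
      exact hmain.1 hsum.symm
    · have hTeq : T (i₀, j₀) = -(∑ p ∈ Finset.univ.erase (i₀, j₀), T p) := by
        exact eq_neg_of_add_eq_zero_left hsum.symm
      have : D = (∑ p ∈ Finset.univ.erase (i₀, j₀), T p).intDegree := by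
        rw [hD, hTeq, RatFunc.intDegree_neg]
      omega
  -- Part 3
  refine ⟨part1, part2, ?_⟩
  intro g hg
  have hsm : ∀ (c : K) (h : Fin m → K) (kk : Fin m),
      cycMulRf k₀ m σ A (fun i => c * h i) g kk = c * cycMulRf k₀ m σ A h g kk := by
    intro c h kk
    simp only [cycMulRf, mul_add, Finset.mul_sum, mul_ite, mul_zero, mul_assoc]
    rw [Finset.mul_sum, Finset.mul_sum]
    simp only [Finset.mul_sum, mul_ite, mul_zero]
  let L : (Fin m → K) →ₗ[K] (Fin m → K) :=
    { toFun := fun h => cycMulRf k₀ m σ A h g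
      map_add' := by
        intro h h'
        funext kk
        simp only [cycMulRf, Pi.add_apply, add_mul]
        simp only [ite_add_zero, Finset.sum_add_distrib]
        abel
      map_smul' := by
        intro c h
        funext kk
        exact hsm c h kk }
  have hinj : Function.Injective L := by
    rw [injective_iff_map_eq_zero]
    intro h hh
    rcases part2 h g hh with h0 | h0
    · exact h0
    · exact absurd h0 hg
  exact ⟨hinj, LinearMap.injective_iff_surjective.mp hinj⟩
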